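/- For the totally directed Bouchaud trap model with heavy-tailed trap depths of index α ∈ (0,1), shallow traps are negligible: for every ε ∈ (0,1), the normalized total time spent in traps of depth at most n^{(1−ε)/α}, namely n^{−1/α} · Σ_{i=0}^{n−1} τ_i e_i · 1{τ_i ≤ n^{(1−ε)/α}}, converges to 0 in probability as n → ∞. -/

import Mathlib

open MeasureTheory ProbabilityTheory Filter Topology Set
open scoped ENNReal

lemma btm_aux_exp_lintegral {Ω : Type*} [MeasureSpace Ω] [IsProbabilityMeasure (ℙ : Measure Ω)]
    (f : Ω → ℝ) (hf : Measurable f)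
    (hexp : ∀ x : ℝ, 0 ≤ x → ℙ {ω | x ≤ f ω} = ENNReal.ofReal (Real.exp (-x))) :
    ∫⁻ ω, ENNReal.ofReal |f ω| ∂ℙ = 1 := by
  have hms : MeasurableSet {ω | 0 ≤ f ω} := measurableSet_le measurable_const hf
  have hnn : ∀ᵐ ω ∂(ℙ : Measure Ω), 0 ≤ f ω := by
    rw [ae_iff]
    have h1 : (ℙ : Measure Ω) {ω | 0 ≤ f ω} = 1 := by simpa using hexp 0 le_rfl
    have : {ω | ¬ 0 ≤ f ω} = {ω | 0 ≤ f ω}ᶜ := rfl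
    rw [this, measure_compl hms (measure_ne_top _ _), measure_univ, h1, tsub_self]
  have heq : ∫⁻ ω, ENNReal.ofReal |f ω| ∂ℙ = ∫⁻ ω, ENNReal.ofReal (f ω) ∂ℙ :=
    lintegral_congr_ae (hnn.mono fun ω h => by by_cases h2 : True <;> simp [abs_of_nonneg h])
  rw [heq, lintegral_eq_lintegral_meas_le ℙ hnn hf.aemeasurable]
  rw [setLIntegral_congr_fun measurableSet_Ioi
    (fun t ht => hexp t (le_of_lt ht))]
  have hint : IntegrableOn (fun t : ℝ => Real.exp (-t)) (Ioi 0) := by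
    simpa using exp_neg_integrableOn_Ioi 0 one_pos
  rw [← ofReal_integral_eq_lintegral_ofReal hint (ae_of_all _ fun t => (Real.exp_pos _).le)]
  rw [integral_exp_neg_Ioi_zero, ENNReal.ofReal_one]

lemma btm_aux_trunc_moment {Ω : Type*} [MeasureSpace Ω] [IsProbabilityMeasure (ℙ : Measure Ω)]
    (f : Ω → ℝ) (hf : Measurable f) (hpos : ∀ ω, 0 < f ω)
    (α t₀ : ℝ) (hα0 : 0 < α) (hα1 : α < 1) (ht₀ : 1 ≤ t₀)
    (htail : ∀ t, t₀ ≤ t → ℙ {ω | t ≤ f ω} ≤ ENNReal.ofReal (2 * t ^ (-α)))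
    (M : ℝ) (hM : t₀ ≤ M) :
    ∫⁻ ω, Set.indicator {ω' | f ω' ≤ M} (fun ω' => ENNReal.ofReal (f ω')) ω ∂ℙ
      ≤ ENNReal.ofReal (t₀ + 2 / (1 - α) * M ^ (1 - α)) := by
  have ht₀0 : (0:ℝ) < t₀ := by linarith
  have hM0 : (0:ℝ) < M := by linarith
  set g : Ω → ℝ := fun ω => if f ω ≤ M then f ω else 0 with hg
  have hgmeas : Measurable g := Measurable.ite (measurableSet_le hf measurable_const) hf
    measurable_const
  have hgnn : ∀ ω, 0 ≤ g ω := fun ω => by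
    by_cases h : f ω ≤ M <;> simp [hg, h, (hpos ω).le]
  have hgle : ∀ a, g a ≤ f a := fun a => by
    by_cases h : f a ≤ M <;> simp [hg, h, (hpos a).le]
  have hgM : ∀ a, g a ≤ M := fun a => by
    by_cases h : f a ≤ M <;> simp [hg, h, hM0.le]
  have h1α : (0:ℝ) < 1 - α := by linarith
  have h1 : ∫⁻ ω, Set.indicator {ω' | f ω' ≤ M} (fun ω' => ENNReal.ofReal (f ω')) ω ∂ℙ
      = ∫⁻ ω, ENNReal.ofReal (g ω) ∂ℙ := by
    refine lintegral_congr fun ω => ?_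
    by_cases h : f ω ≤ M <;>
      simp [Set.indicator_apply, Set.mem_setOf_eq, h, hg]
  rw [h1, lintegral_eq_lintegral_meas_le ℙ (ae_of_all _ hgnn) hgmeas.aemeasurable]
  -- split the domain
  have hsub : Ioi (0:ℝ) ⊆ (Ioc 0 t₀ ∪ Ioc t₀ M) ∪ Ioi M := by
    intro t ht
    simp only [Set.mem_union, Set.mem_Ioc, Set.mem_Ioi] at *
    rcases le_or_gt t M with h | h
    · rcases le_or_gt t t₀ with h' | h'
      · exact Or.inl (Or.inl ⟨ht, h'⟩)
      · exact Or.inl (Or.inr ⟨h', h⟩)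
    · exact Or.inr h
  calc ∫⁻ t in Ioi 0, ℙ {a | t ≤ g a}
      ≤ ∫⁻ t in (Ioc 0 t₀ ∪ Ioc t₀ M) ∪ Ioi M, ℙ {a | t ≤ g a} :=
        lintegral_mono_set hsub
    _ ≤ (∫⁻ t in Ioc 0 t₀ ∪ Ioc t₀ M, ℙ {a | t ≤ g a}) + ∫⁻ t in Ioi M, ℙ {a | t ≤ g a} :=
        lintegral_union_le _ _ _
    _ ≤ ((∫⁻ t in Ioc 0 t₀, ℙ {a | t ≤ g a}) + ∫⁻ t in Ioc t₀ M, ℙ {a | t ≤ g a})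
          + ∫⁻ t in Ioi M, ℙ {a | t ≤ g a} :=
        add_le_add (lintegral_union_le _ _ _) le_rfl
    _ ≤ (ENNReal.ofReal t₀ + ENNReal.ofReal (2 / (1 - α) * M ^ (1 - α))) + 0 := by
        gcongr
        · -- first piece ≤ t₀
          calc ∫⁻ t in Ioc 0 t₀, ℙ {a | t ≤ g a} ≤ ∫⁻ _ in Ioc 0 t₀, 1 :=
              setLIntegral_mono measurable_const fun t _ => prob_le_one
            _ = ENNReal.ofReal t₀ := by
              rw [setLIntegral_one, Real.volume_Ioc, sub_zero]
        · -- middle piece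
          have hstep : ∫⁻ t in Ioc t₀ M, ℙ {a | t ≤ g a}
              ≤ ∫⁻ t in Ioc t₀ M, ENNReal.ofReal (2 * t ^ (-α)) := by
            refine setLIntegral_mono (by fun_prop) fun t ht => ?_
            refine le_trans (measure_mono fun a ha => ?_) (htail t ht.1.le)
            exact le_trans ha (hgle a)
          refine hstep.trans ?_
          have hintg : IntegrableOn (fun t : ℝ => 2 * t ^ (-α)) (Ioc t₀ M) := by
            have := (intervalIntegral.intervalIntegrable_rpow' (show (-1:ℝ) < -α by linarith)
              (a := t₀) (b := M)).const_mul 2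
            rwa [intervalIntegrable_iff_integrableOn_Ioc_of_le hM] at this
          have hnn2 : 0 ≤ᵐ[volume.restrict (Ioc t₀ M)] fun t : ℝ => 2 * t ^ (-α) := by
            refine (ae_restrict_iff' measurableSet_Ioc).2 (ae_of_all _ fun t ht => ?_)
            have : (0:ℝ) < t := lt_of_lt_of_le ht₀0 ht.1.le
            positivity
          rw [← ofReal_integral_eq_lintegral_ofReal hintg hnn2]
          refine ENNReal.ofReal_le_ofReal ?_
          have hval : ∫ t in Ioc t₀ M, 2 * t ^ (-α) =
              2 * ((M ^ (-α + 1) - t₀ ^ (-α + 1)) / (-α + 1)) := by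
            rw [← intervalIntegral.integral_of_le hM, intervalIntegral.integral_const_mul,
              integral_rpow (Or.inl (by linarith))]
          rw [hval, show -α + 1 = 1 - α by ring]
          have ht₀nn : (0:ℝ) ≤ t₀ ^ (1 - α) := Real.rpow_nonneg ht₀0.le _
          rw [show (2:ℝ) / (1-α) * M ^ (1-α) = 2 * M ^ (1-α) / (1-α) by ring,
            show 2*((M ^ (1-α) - t₀ ^ (1-α))/(1-α)) = 2*(M ^ (1-α) - t₀ ^ (1-α))/(1-α) by ring]
          gcongr
          linarith
        · -- tail piece is zero
          have : ∀ t ∈ Ioi M, ℙ {a | t ≤ g a} = 0 := by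
            intro t ht
            have hempty : {a | t ≤ g a} = (∅ : Set Ω) := by
              ext a
              simp only [Set.mem_setOf_eq, Set.mem_empty_iff_false, iff_false, not_le]
              exact lt_of_le_of_lt (hgM a) ht
            rw [hempty, measure_empty]
          rw [setLIntegral_congr_fun measurableSet_Ioi this]
          simp
    _ = ENNReal.ofReal (t₀ + 2 / (1 - α) * M ^ (1 - α)) := by
        rw [add_zero, ← ENNReal.ofReal_add ht₀0.le
          (mul_nonneg (div_nonneg (by norm_num) h1α.le) (Real.rpow_nonneg hM0.le _))]

lemma btm_aux_limit (α ε t₀ C : ℝ) (hα0 : 0 < α) (hα1 : α < 1) (hε0 : 0 < ε) (hε1 : ε < 1) :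
    Tendsto (fun n : ℕ => (n : ℝ) ^ (-(1/α)) * n *
      (t₀ + C * ((n:ℝ) ^ ((1-ε)/α)) ^ (1-α))) atTop (𝓝 0) := by
  set p1 : ℝ := -(1/α) + 1 with hp1
  set p2 : ℝ := p1 + (1-ε)/α * (1-α) with hp2
  have hrp : ∀ p : ℝ, p < 0 → Tendsto (fun n : ℕ => (n:ℝ) ^ p) atTop (𝓝 0) := by
    intro p hp
    have := (tendsto_rpow_neg_atTop (show (0:ℝ) < -p by linarith)).comp
      (tendsto_natCast_atTop_atTop (R := ℝ) : Tendsto (Nat.cast : ℕ → ℝ) atTop atTop)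
    simpa [Function.comp_def] using this
  have hp1neg : p1 < 0 := by
    have : 1 < 1/α := (one_lt_one_div hα0 hα1)
    rw [hp1]; linarith
  have hp2neg : p2 < 0 := by
    have h : p2 = -(ε * (1-α)) / α := by
      rw [hp2, hp1]; field_simp; ring
    rw [h]
    apply div_neg_of_neg_of_pos _ hα0
    nlinarith
  have hlim : Tendsto (fun n : ℕ => t₀ * (n:ℝ) ^ p1 + C * (n:ℝ) ^ p2) atTop (𝓝 0) := by
    have := ((hrp p1 hp1neg).const_mul t₀).add ((hrp p2 hp2neg).const_mul C)
    simpa using this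
  refine hlim.congr' ?_
  filter_upwards [eventually_ge_atTop 1] with n hn
  have hn0 : (0:ℝ) < n := by exact_mod_cast hn
  have h1 : ((n:ℝ) ^ ((1-ε)/α)) ^ (1-α) = (n:ℝ) ^ ((1-ε)/α * (1-α)) :=
    (Real.rpow_mul hn0.le _ _).symm
  have h2 : (n:ℝ) ^ (-(1/α)) * n = (n:ℝ) ^ p1 := by
    rw [hp1, Real.rpow_add hn0, Real.rpow_one]
  have h3 : (n:ℝ) ^ p2 = (n:ℝ) ^ p1 * (n:ℝ) ^ ((1-ε)/α * (1-α)) := by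
    rw [hp2, Real.rpow_add hn0]
  rw [h3, h1, h2]
  ring

/-- For the totally directed Bouchaud trap model with heavy tails of index `α ∈ (0,1)`,
the normalized total time spent in traps of depth at most `n^{(1-ε)/α}` converges to `0`
in probability, for every `ε ∈ (0,1)`. -/
theorem btm_shallow_traps_negligible
    {Ω : Type*} [MeasureSpace Ω] [IsProbabilityMeasure (ℙ : Measure Ω)]
    (τ e : ℕ → Ω → ℝ)
    (hτmeas : ∀ i, Measurable (τ i)) (hemeas : ∀ i, Measurable (e i))
    (hτpos : ∀ i ω, 0 < τ i ω)
    (hτident : ∀ i, IdentDistrib (τ i) (τ 0) ℙ ℙ)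
    (heident : ∀ i, IdentDistrib (e i) (e 0) ℙ ℙ)
    (hindep : iIndepFun
      (Sum.elim τ e) ℙ)
    (hexp : ∀ x : ℝ, 0 ≤ x → ℙ {ω | x ≤ e 0 ω} = ENNReal.ofReal (Real.exp (-x)))
    (α : ℝ) (hα0 : 0 < α) (hα1 : α < 1)
    (htail : Tendsto (fun t : ℝ => t ^ α * (ℙ {ω | t ≤ τ 0 ω}).toReal)
      atTop (𝓝 1))
    (ε : ℝ) (hε0 : 0 < ε) (hε1 : ε < 1) :
    TendstoInMeasure ℙ
      (fun (n : ℕ) (ω : Ω) => (n : ℝ) ^ (-(1 / α)) *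
        ∑ i ∈ Finset.range n,
          Set.indicator {ω' | τ i ω' ≤ (n : ℝ) ^ ((1 - ε) / α)}
            (fun ω' => τ i ω' * e i ω') ω)
      atTop (fun _ => (0 : ℝ)) := by
  -- tail bound with explicit constants
  obtain ⟨t₀, ht₀1, htail'⟩ : ∃ t₀, 1 ≤ t₀ ∧ ∀ t, t₀ ≤ t →
      ℙ {ω | t ≤ τ 0 ω} ≤ ENNReal.ofReal (2 * t ^ (-α)) := by
    have h2 : ∀ᶠ t in atTop, t ^ α * (ℙ {ω | t ≤ τ 0 ω}).toReal ≤ 2 :=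
      htail.eventually (eventually_le_nhds one_lt_two)
    obtain ⟨a, ha⟩ := eventually_atTop.1 (h2.and (eventually_ge_atTop 1))
    refine ⟨max a 1, le_max_right _ _, fun t ht => ?_⟩
    obtain ⟨h2t, h1t⟩ := ha t (le_trans (le_max_left _ _) ht)
    have ht0 : (0:ℝ) < t := by linarith
    have htα : (0:ℝ) < t ^ α := Real.rpow_pos_of_pos ht0 α
    have hle : (ℙ {ω | t ≤ τ 0 ω}).toReal ≤ 2 * t ^ (-α) := by
      rw [Real.rpow_neg ht0.le, mul_comm, inv_mul_eq_div, le_div_iff₀ htα, mul_comm]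
      exact h2t
    calc ℙ {ω | t ≤ τ 0 ω} = ENNReal.ofReal (ℙ {ω | t ≤ τ 0 ω}).toReal :=
          (ENNReal.ofReal_toReal (measure_ne_top _ _)).symm
      _ ≤ _ := ENNReal.ofReal_le_ofReal hle
  set C : ℝ := 2 / (1 - α) with hC
  have hEe : ∫⁻ ω, ENNReal.ofReal |e 0 ω| ∂ℙ = 1 := btm_aux_exp_lintegral _ (hemeas 0) hexp
  have hIndep : ∀ i : ℕ, IndepFun (τ i) (e i) ℙ := fun i =>
    hindep.indepFun (show (Sum.inl i : ℕ ⊕ ℕ) ≠ Sum.inr i by simp)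
  rw [tendstoInMeasure_iff_dist]
  intro δ hδ
  set M : ℕ → ℝ := fun n => (n:ℝ) ^ ((1-ε)/α) with hMdef
  set B : ℕ → ℝ := fun n => (n:ℝ) ^ (-(1/α)) * n * (t₀ + C * (M n) ^ (1-α)) with hB
  -- the main estimate
  have key : ∀ n : ℕ, t₀ ≤ M n →
      ℙ {x | δ ≤ dist ((n : ℝ) ^ (-(1 / α)) *
        ∑ i ∈ Finset.range n,
          Set.indicator {ω' | τ i ω' ≤ (n : ℝ) ^ ((1 - ε) / α)}
            (fun ω' => τ i ω' * e i ω') x) ((fun _ => (0:ℝ)) x)}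
      ≤ ENNReal.ofReal (B n) / ENNReal.ofReal δ := by
    intro n hMn
    set Y : Ω → ℝ := fun x => (n : ℝ) ^ (-(1 / α)) *
        ∑ i ∈ Finset.range n,
          Set.indicator {ω' | τ i ω' ≤ (n : ℝ) ^ ((1 - ε) / α)}
            (fun ω' => τ i ω' * e i ω') x with hY
    have hnr : (0:ℝ) ≤ (n:ℝ) ^ (-(1/α)) := Real.rpow_nonneg (Nat.cast_nonneg n) _
    have hYmeas : Measurable Y := by
      apply Measurable.const_mul
      exact Finset.measurable_sum _ fun i _ =>
        (((hτmeas i).mul (hemeas i)).indicator (measurableSet_le (hτmeas i) measurable_const))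
    -- pointwise bound in ℝ≥0∞
    have hpt : ∀ x, ENNReal.ofReal |Y x| ≤ ENNReal.ofReal ((n:ℝ) ^ (-(1/α))) *
        ∑ i ∈ Finset.range n,
          Set.indicator {ω' | τ i ω' ≤ M n}
            (fun ω' => ENNReal.ofReal (τ i ω') * ENNReal.ofReal |e i ω'|) x := by
      intro x
      rw [hY]
      simp only
      rw [abs_mul, abs_of_nonneg hnr, ENNReal.ofReal_mul hnr]
      refine mul_le_mul_right ?_ _
      calc ENNReal.ofReal |∑ i ∈ Finset.range n,
              Set.indicator {ω' | τ i ω' ≤ (n : ℝ) ^ ((1 - ε) / α)}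
                (fun ω' => τ i ω' * e i ω') x|
          ≤ ENNReal.ofReal (∑ i ∈ Finset.range n,
              |Set.indicator {ω' | τ i ω' ≤ (n : ℝ) ^ ((1 - ε) / α)}
                (fun ω' => τ i ω' * e i ω') x|) :=
            ENNReal.ofReal_le_ofReal (Finset.abs_sum_le_sum_abs _ _)
        _ = ∑ i ∈ Finset.range n, ENNReal.ofReal
              |Set.indicator {ω' | τ i ω' ≤ (n : ℝ) ^ ((1 - ε) / α)}
                (fun ω' => τ i ω' * e i ω') x| :=
            ENNReal.ofReal_sum_of_nonneg fun i _ => abs_nonneg _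
        _ = ∑ i ∈ Finset.range n,
              Set.indicator {ω' | τ i ω' ≤ M n}
                (fun ω' => ENNReal.ofReal (τ i ω') * ENNReal.ofReal |e i ω'|) x := by
            refine Finset.sum_congr rfl fun i _ => ?_
            by_cases h : τ i x ≤ M n
            · rw [Set.indicator_of_mem
                  (show x ∈ {ω' | τ i ω' ≤ (n:ℝ) ^ ((1 - ε) / α)} from h),
                Set.indicator_of_mem (show x ∈ {ω' | τ i ω' ≤ M n} from h),
                abs_mul, abs_of_pos (hτpos i x), ENNReal.ofReal_mul (hτpos i x).le]
            · rw [Set.indicator_of_notMem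
                  (show x ∉ {ω' | τ i ω' ≤ (n:ℝ) ^ ((1 - ε) / α)} from h),
                Set.indicator_of_notMem (show x ∉ {ω' | τ i ω' ≤ M n} from h)]
              simp
    -- integral of each summand
    have hterm : ∀ i : ℕ, ∫⁻ x, Set.indicator {ω' | τ i ω' ≤ M n}
          (fun ω' => ENNReal.ofReal (τ i ω') * ENNReal.ofReal |e i ω'|) x ∂ℙ
        ≤ ENNReal.ofReal (t₀ + C * (M n) ^ (1-α)) := by
      intro i
      set F : ℝ → ℝ≥0∞ := (Set.Iic (M n)).indicator ENNReal.ofReal with hF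
      set G : ℝ → ℝ≥0∞ := fun y => ENNReal.ofReal |y| with hG
      have hFmeas : Measurable F := ENNReal.measurable_ofReal.indicator measurableSet_Iic
      have hGmeas : Measurable G := ENNReal.measurable_ofReal.comp measurable_abs
      have hptw : ∀ x, Set.indicator {ω' | τ i ω' ≤ M n}
          (fun ω' => ENNReal.ofReal (τ i ω') * ENNReal.ofReal |e i ω'|) x
          = F (τ i x) * G (e i x) := by
        intro x
        by_cases h : τ i x ≤ M n
        · rw [Set.indicator_of_mem (show x ∈ {ω' | τ i ω' ≤ M n} from h), hF,
            Set.indicator_of_mem (show τ i x ∈ Set.Iic (M n) from h)]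
        · rw [Set.indicator_of_notMem (show x ∉ {ω' | τ i ω' ≤ M n} from h), hF,
            Set.indicator_of_notMem (show τ i x ∉ Set.Iic (M n) from h), zero_mul]
      calc ∫⁻ x, Set.indicator {ω' | τ i ω' ≤ M n}
              (fun ω' => ENNReal.ofReal (τ i ω') * ENNReal.ofReal |e i ω'|) x ∂ℙ
          = ∫⁻ x, F (τ i x) * G (e i x) ∂ℙ := lintegral_congr hptw
        _ = (∫⁻ x, F (τ i x) ∂ℙ) * ∫⁻ x, G (e i x) ∂ℙ :=
            lintegral_mul_eq_lintegral_mul_lintegral_of_indepFun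
              (hFmeas.comp (hτmeas i)) (hGmeas.comp (hemeas i))
              ((hIndep i).comp hFmeas hGmeas)
        _ = (∫⁻ x, F (τ 0 x) ∂ℙ) * ∫⁻ x, G (e 0 x) ∂ℙ := by
            rw [show (∫⁻ x, F (τ i x) ∂ℙ) = ∫⁻ x, F (τ 0 x) ∂ℙ from
                ((hτident i).comp hFmeas).lintegral_eq,
              show (∫⁻ x, G (e i x) ∂ℙ) = ∫⁻ x, G (e 0 x) ∂ℙ from
                ((heident i).comp hGmeas).lintegral_eq]
        _ ≤ ENNReal.ofReal (t₀ + C * (M n) ^ (1-α)) * 1 := by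
            refine mul_le_mul' ?_ (le_of_eq hEe)
            have : ∀ x, F (τ 0 x) = Set.indicator {ω' | τ 0 ω' ≤ M n}
                (fun ω' => ENNReal.ofReal (τ 0 ω')) x := by
              intro x
              by_cases h : τ 0 x ≤ M n
              · rw [hF, Set.indicator_of_mem (show τ 0 x ∈ Set.Iic (M n) from h),
                  Set.indicator_of_mem (show x ∈ {ω' | τ 0 ω' ≤ M n} from h)]
              · rw [hF, Set.indicator_of_notMem (show τ 0 x ∉ Set.Iic (M n) from h),
                  Set.indicator_of_notMem (show x ∉ {ω' | τ 0 ω' ≤ M n} from h)]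
            rw [lintegral_congr this, hC]
            exact btm_aux_trunc_moment (τ 0) (hτmeas 0) (hτpos 0) α t₀ hα0 hα1 ht₀1
              htail' (M n) hMn
        _ = ENNReal.ofReal (t₀ + C * (M n) ^ (1-α)) := mul_one _
    -- Markov inequality
    show ℙ {x | δ ≤ dist (Y x) ((fun _ => (0:ℝ)) x)} ≤ ENNReal.ofReal (B n) / ENNReal.ofReal δ
    have hset : {x | δ ≤ dist (Y x) ((fun _ => (0:ℝ)) x)}
        = {x | ENNReal.ofReal δ ≤ ENNReal.ofReal |Y x|} := by
      ext x
      simp only [Set.mem_setOf_eq, Real.dist_0_eq_abs,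
        ENNReal.ofReal_le_ofReal_iff (abs_nonneg _)]
    calc ℙ {x | δ ≤ dist (Y x) ((fun _ => (0:ℝ)) x)}
        ≤ (∫⁻ x, ENNReal.ofReal |Y x| ∂ℙ) / ENNReal.ofReal δ := by
          rw [hset]
          exact meas_ge_le_lintegral_div (hYmeas.abs.ennreal_ofReal).aemeasurable
            (ENNReal.ofReal_pos.2 hδ).ne' ENNReal.ofReal_ne_top
      _ ≤ ENNReal.ofReal (B n) / ENNReal.ofReal δ := by
          gcongr
          calc ∫⁻ x, ENNReal.ofReal |Y x| ∂ℙ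
              ≤ ∫⁻ x, ENNReal.ofReal ((n:ℝ) ^ (-(1/α))) *
                ∑ i ∈ Finset.range n,
                  Set.indicator {ω' | τ i ω' ≤ M n}
                    (fun ω' => ENNReal.ofReal (τ i ω') * ENNReal.ofReal |e i ω'|) x ∂ℙ :=
                lintegral_mono hpt
            _ = ENNReal.ofReal ((n:ℝ) ^ (-(1/α))) * ∑ i ∈ Finset.range n,
                  ∫⁻ x, Set.indicator {ω' | τ i ω' ≤ M n}
                    (fun ω' => ENNReal.ofReal (τ i ω') * ENNReal.ofReal |e i ω'|) x ∂ℙ := by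
                rw [lintegral_const_mul]
                · rw [lintegral_finset_sum]
                  intro i _
                  exact ((ENNReal.measurable_ofReal.comp (hτmeas i)).mul
                    (ENNReal.measurable_ofReal.comp (hemeas i).abs)).indicator
                    (measurableSet_le (hτmeas i) measurable_const)
                · exact Finset.measurable_sum _ fun i _ =>
                    ((ENNReal.measurable_ofReal.comp (hτmeas i)).mul
                      (ENNReal.measurable_ofReal.comp (hemeas i).abs)).indicator
                      (measurableSet_le (hτmeas i) measurable_const)
            _ ≤ ENNReal.ofReal ((n:ℝ) ^ (-(1/α))) * ∑ _i ∈ Finset.range n,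
                  ENNReal.ofReal (t₀ + C * (M n) ^ (1-α)) := by
                gcongr with i hi
                exact hterm i
            _ = ENNReal.ofReal (B n) := by
                rw [Finset.sum_const, Finset.card_range, nsmul_eq_mul, hB]
                simp only
                rw [show ((n:ℕ):ℝ≥0∞) = ENNReal.ofReal ((n:ℕ):ℝ) by
                    rw [ENNReal.ofReal_natCast],
                  ← ENNReal.ofReal_mul (Nat.cast_nonneg n),
                  ← ENNReal.ofReal_mul hnr, mul_assoc]
  -- conclusion
  have hBlim : Tendsto (fun n : ℕ => ENNReal.ofReal (B n) / ENNReal.ofReal δ) atTop (𝓝 0) := by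
    have h0 : Tendsto B atTop (𝓝 0) := btm_aux_limit α ε t₀ C hα0 hα1 hε0 hε1
    have h1 : Tendsto (fun n : ℕ => ENNReal.ofReal (B n)) atTop (𝓝 0) := by
      have := ENNReal.tendsto_ofReal h0
      simpa using this
    have h2 := ENNReal.Tendsto.mul_const h1
      (Or.inr (show (ENNReal.ofReal δ)⁻¹ ≠ ∞ by simp [(ENNReal.ofReal_pos.2 hδ).ne']))
    simpa [div_eq_mul_inv] using h2
  refine tendsto_of_tendsto_of_tendsto_of_le_of_le' tendsto_const_nhds hBlim ?_ ?_
  · exact Eventually.of_forall fun n => zero_le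
  · have hMtend : Tendsto M atTop atTop := by
      have hpos : (0:ℝ) < (1-ε)/α := div_pos (by linarith) hα0
      exact (tendsto_rpow_atTop hpos).comp
        (tendsto_natCast_atTop_atTop (R := ℝ) : Tendsto (Nat.cast : ℕ → ℝ) atTop atTop)
    filter_upwards [hMtend.eventually_ge_atTop t₀] with n hn using key n hn
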